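/- For all integers m, t, q with 0 < t < m and q ≥ 2, there exists a (C(m,t)·q^t, q^{m−1}, q^{m−1} − (q−1)^t·q^{m−t−1}, (q−1)^t·q^{m−1}) placement delivery array, where C(m,t) denotes the binomial coefficient. -/

import Mathlib

/-- A `(K,F,S)` placement delivery array: an `F × K` array with entries in
`{*} ∪ {0,...,S-1}` (a star is modelled by `none`), such that every integer
appears at least once, and whenever two distinct cells contain the same
integer `s`, they lie in distinct rows and distinct columns and the two
cells at the remaining corners of the `2 × 2` subarray they determine are
both stars. -/
def IsPDA (F K S : ℕ) (P : Fin F → Fin K → Option (Fin S)) : Prop :=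
  (∀ s : Fin S, ∃ j k, P j k = some s) ∧
  ∀ (j₁ j₂ : Fin F) (k₁ k₂ : Fin K) (s : Fin S),
    (j₁, k₁) ≠ (j₂, k₂) → P j₁ k₁ = some s → P j₂ k₂ = some s →
      j₁ ≠ j₂ ∧ k₁ ≠ k₂ ∧ P j₁ k₂ = none ∧ P j₂ k₁ = none

/-- A `(K,F,Z,S)` placement delivery array: a `(K,F,S)` PDA each of whose
columns contains exactly `Z` stars. -/
def IsPDAWith (F K Z S : ℕ) (P : Fin F → Fin K → Option (Fin S)) : Prop :=
  IsPDA F K S P ∧ ∀ k : Fin K, {j : Fin F | P j k = none}.ncard = Z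

open Finset

namespace PDAOA

variable {n t q : ℕ}

/-- Ambient vector space. -/
abbrev V (n q : ℕ) := Fin (n + 1) → ZMod q

/-- Rows: sum-zero vectors. -/
abbrev X (n q : ℕ) := {x : V n q // ∑ i, x i = 0}

/-- Columns: a `t`-subset together with values. -/
abbrev Col (n t q : ℕ) := {T : Finset (Fin (n + 1)) // T.card = t} × (Fin t → ZMod q)

/-- Symbols. -/
abbrev Sym (n t q : ℕ) := (Fin t → {a : ZMod q // a ≠ 0}) × (Fin n → ZMod q)

/-- The increasing enumeration of the subset of a column. -/
def σc (c : Col n t q) (i : Fin t) : Fin (n + 1) := (c.1.1.orderIsoOfFin c.1.2 i : Fin (n + 1))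

lemma σc_mem (c : Col n t q) (i : Fin t) : σc c i ∈ c.1.1 := (c.1.1.orderIsoOfFin c.1.2 i).2

/-- Inverse of the enumeration. -/
def binv (c : Col n t q) (j : Fin (n + 1)) (h : j ∈ c.1.1) : Fin t :=
  (c.1.1.orderIsoOfFin c.1.2).symm ⟨j, h⟩

lemma binv_σc (c : Col n t q) (i : Fin t) (h : σc c i ∈ c.1.1) : binv c (σc c i) h = i := by
  have : (⟨σc c i, h⟩ : {j // j ∈ c.1.1}) = c.1.1.orderIsoOfFin c.1.2 i := Subtype.ext rfl
  rw [binv, this, OrderIso.symm_apply_apply]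

lemma σc_binv (c : Col n t q) (j : Fin (n + 1)) (h : j ∈ c.1.1) : σc c (binv c j h) = j := by
  rw [σc, binv, OrderIso.apply_symm_apply]

/-- The vector obtained from `x` by overwriting the coordinates in the column's subset
by the column's prescribed values. -/
def zvec (x : V n q) (c : Col n t q) : V n q :=
  fun j => if h : j ∈ c.1.1 then c.2 (binv c j h) else x j

lemma zvec_σc (x : V n q) (c : Col n t q) (i : Fin t) : zvec x c (σc c i) = c.2 i := by
  rw [zvec, dif_pos (σc_mem c i), binv_σc]

lemma zvec_not_mem (x : V n q) (c : Col n t q) {j : Fin (n + 1)} (h : j ∉ c.1.1) :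
    zvec x c j = x j := dif_neg h

lemma sum_over_T (c : Col n t q) (f : Fin (n + 1) → ZMod q) :
    ∑ j ∈ c.1.1, f j = ∑ i, f (σc c i) := by
  rw [← Finset.sum_coe_sort]
  exact (Equiv.sum_comp (c.1.1.orderIsoOfFin c.1.2).toEquiv fun p => f (p : Fin (n + 1))).symm

lemma sum_zvec (x : V n q) (c : Col n t q) :
    ∑ j, zvec x c j = ∑ j, x j - ∑ i, (x (σc c i) - c.2 i) := by
  rw [← Finset.sum_add_sum_compl c.1.1 (zvec x c), ← Finset.sum_add_sum_compl c.1.1 x]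
  have h1 : ∑ j ∈ c.1.1, zvec x c j = ∑ i, c.2 i := by
    rw [sum_over_T]; exact Finset.sum_congr rfl fun i _ => zvec_σc x c i
  have h2 : ∑ j ∈ c.1.1ᶜ, zvec x c j = ∑ j ∈ c.1.1ᶜ, x j :=
    Finset.sum_congr rfl fun j hj => zvec_not_mem x c (Finset.mem_compl.1 hj)
  have h3 : ∑ j ∈ c.1.1, x j = ∑ i, x (σc c i) := sum_over_T c x
  rw [h1, h2, h3, Finset.sum_sub_distrib]
  ring

/-- A vector over `Fin (n+1)` is determined by its first `n` coordinates and its sum. -/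
lemma ext_of_castSucc_sum {z z' : V n q} (h1 : ∀ i : Fin n, z i.castSucc = z' i.castSucc)
    (h2 : ∑ j, z j = ∑ j, z' j) : z = z' := by
  have hs : ∑ i : Fin n, z i.castSucc = ∑ i : Fin n, z' i.castSucc :=
    Finset.sum_congr rfl fun i _ => h1 i
  rw [Fin.sum_univ_castSucc, Fin.sum_univ_castSucc, hs] at h2
  have hl : z (Fin.last n) = z' (Fin.last n) := by
    exact add_left_cancel h2
  funext j
  refine Fin.lastCases hl h1 j

/-- The PDA entry. -/
def entry (x : X n q) (c : Col n t q) : Option (Sym n t q) :=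
  if h : ∀ i, x.1 (σc c i) ≠ c.2 i then
    some (fun i => ⟨x.1 (σc c i) - c.2 i, sub_ne_zero_of_ne (h i)⟩,
          fun i => zvec x.1 c i.castSucc)
  else none

lemma entry_eq_none_iff (x : X n q) (c : Col n t q) :
    entry x c = none ↔ ¬ ∀ i, x.1 (σc c i) ≠ c.2 i := by
  rw [entry]; split <;> simp_all

lemma entry_eq_some (x : X n q) (c : Col n t q) {s : Sym n t q} (h : entry x c = some s) :
    (∀ i, (s.1 i : ZMod q) = x.1 (σc c i) - c.2 i) ∧
    (∀ i : Fin n, s.2 i = zvec x.1 c i.castSucc) ∧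
    (∀ i, x.1 (σc c i) ≠ c.2 i) := by
  rw [entry] at h
  split at h
  · rename_i hc
    obtain rfl : _ = s := Option.some_injective _ h
    exact ⟨fun i => rfl, fun i => rfl, hc⟩
  · exact absurd h (by simp)

lemma sum_zvec_of_some {x : X n q} {c : Col n t q} {s : Sym n t q} (h : entry x c = some s) :
    ∑ j, zvec x.1 c j = - ∑ i, (s.1 i : ZMod q) := by
  obtain ⟨h1, _, _⟩ := entry_eq_some x c h
  rw [sum_zvec, x.2]
  rw [show ∑ i, ((s.1 i : ZMod q)) = ∑ i, (x.1 (σc c i) - c.2 i) from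
    Finset.sum_congr rfl fun i _ => h1 i]
  ring

lemma zvec_eq_of_same_symbol {x x' : X n q} {c c' : Col n t q} {s : Sym n t q}
    (h : entry x c = some s) (h' : entry x' c' = some s) :
    zvec x.1 c = zvec x'.1 c' := by
  obtain ⟨_, h2, _⟩ := entry_eq_some x c h
  obtain ⟨_, h2', _⟩ := entry_eq_some x' c' h'
  refine ext_of_castSucc_sum (fun i => by rw [← h2 i, ← h2' i]) ?_
  rw [sum_zvec_of_some h, sum_zvec_of_some h']

/-- The key clash lemma. -/
lemma clash {x x' : X n q} {c c' : Col n t q} {s : Sym n t q}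
    (h : entry x c = some s) (h' : entry x' c' = some s)
    (hne : (x, c) ≠ (x', c')) :
    x ≠ x' ∧ c ≠ c' ∧ entry x c' = none ∧ entry x' c = none := by
  obtain ⟨hd, _, hs⟩ := entry_eq_some x c h
  obtain ⟨hd', _, hs'⟩ := entry_eq_some x' c' h'
  have hz : zvec x.1 c = zvec x'.1 c' := zvec_eq_of_same_symbol h h'
  by_cases hT : c.1.1 = c'.1.1
  · -- same subset : the two cells coincide, contradiction
    exfalso
    obtain ⟨⟨T1, hc1⟩, b1⟩ := c
    obtain ⟨⟨T2, hc2⟩, b2⟩ := c'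
    simp only at hT
    subst hT
    set c : Col n t q := (⟨T1, hc1⟩, b1) with hcdef
    set c' : Col n t q := (⟨T1, hc2⟩, b2) with hcdef'
    have hσ : ∀ i, σc c i = σc c' i := fun i => rfl
    have hb : b1 = b2 := by
      funext i
      rw [show b1 i = c.2 i from rfl, show b2 i = c'.2 i from rfl,
        ← zvec_σc x.1 c i, hz, hσ i, zvec_σc]
    have hx : x = x' := by
      refine Subtype.ext (funext fun j => ?_)
      by_cases hj : j ∈ T1
      · have e1 : x.1 j = c.2 (binv c j hj) + (s.1 (binv c j hj) : ZMod q) := by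
          have := hd (binv c j hj); rw [σc_binv] at this; rw [this]; ring
        have e2 : x'.1 j = c'.2 (binv c' j hj) + (s.1 (binv c' j hj) : ZMod q) := by
          have := hd' (binv c' j hj); rw [σc_binv] at this; rw [this]; ring
        have hbi : binv c j hj = binv c' j hj := rfl
        rw [e1, e2, hbi]
        show b1 _ + _ = b2 _ + _
        rw [hb]
      · rw [← zvec_not_mem x.1 c hj, hz, zvec_not_mem x'.1 c' hj]
    exact hne (by rw [hx]; cases hb; rfl)
  · -- different subsets
    have hcard : c.1.1.card = c'.1.1.card := by rw [c.1.2, c'.1.2]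
    have hex : ∃ j ∈ c.1.1, j ∉ c'.1.1 := by
      by_contra hcon
      push_neg at hcon
      exact hT (Finset.eq_of_subset_of_card_le hcon (le_of_eq hcard.symm))
    have hex' : ∃ j ∈ c'.1.1, j ∉ c.1.1 := by
      by_contra hcon
      push_neg at hcon
      exact hT (Finset.eq_of_subset_of_card_le hcon (le_of_eq hcard)).symm
    obtain ⟨j, hjT, hjT'⟩ := hex
    obtain ⟨j', hj'T', hj'T⟩ := hex'
    have key : x'.1 j = c.2 (binv c j hjT) := by
      rw [← zvec_not_mem x'.1 c' hjT', ← hz, zvec, dif_pos hjT]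
    have key' : x.1 j' = c'.2 (binv c' j' hj'T') := by
      rw [← zvec_not_mem x.1 c hj'T, hz, zvec, dif_pos hj'T']
    refine ⟨?_, ?_, ?_, ?_⟩
    · intro hxx
      have : x.1 j ≠ c.2 (binv c j hjT) := by
        have := hs (binv c j hjT); rwa [σc_binv] at this
      exact this (by rw [hxx]; exact key)
    · exact fun hcc => hT (congrArg (fun c => c.1.1) hcc)
    · rw [entry_eq_none_iff]
      push_neg
      exact ⟨binv c' j' hj'T', by rwa [σc_binv]⟩
    · rw [entry_eq_none_iff]
      push_neg
      exact ⟨binv c j hjT, by rwa [σc_binv]⟩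

/-- Surjectivity of symbols. -/
lemma surj (htn : t ≤ n) (s : Sym n t q) : ∃ x c, entry x c = some s := by
  have ht1 : t ≤ n + 1 := htn.trans (Nat.le_succ n)
  set T₀ : Finset (Fin (n + 1)) := Finset.map (Fin.castLEEmb ht1) Finset.univ with hT₀
  have hT₀card : T₀.card = t := by simp [hT₀]
  set cT : {T : Finset (Fin (n + 1)) // T.card = t} := ⟨T₀, hT₀card⟩ with hcT
  -- the z vector
  set z : V n q := Fin.snoc s.2 (-(∑ i, (s.1 i : ZMod q)) - ∑ i, s.2 i) with hzdef
  have hzsum : ∑ j, z j = -(∑ i, (s.1 i : ZMod q)) := by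
    rw [Fin.sum_univ_castSucc]
    have h1 : ∀ i : Fin n, z i.castSucc = s.2 i := fun i => by rw [hzdef, Fin.snoc_castSucc]
    rw [Finset.sum_congr rfl fun i _ => h1 i, hzdef, Fin.snoc_last]
    ring
  -- the b values and column
  set c : Col n t q := (cT, fun i => z ((cT.1.orderIsoOfFin cT.2 i : Fin (n + 1)))) with hc
  have hσ : ∀ i, σc c i = (cT.1.orderIsoOfFin cT.2 i : Fin (n + 1)) := fun i => rfl
  have hb : ∀ i, c.2 i = z (σc c i) := fun i => rfl
  -- the row
  set xv : V n q := fun j => if h : j ∈ c.1.1 then z j + (s.1 (binv c j h) : ZMod q) else z j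
    with hxv
  have hxσ : ∀ i, xv (σc c i) = z (σc c i) + (s.1 i : ZMod q) := by
    intro i
    rw [hxv]
    simp only
    rw [dif_pos (σc_mem c i), binv_σc]
  have hxnot : ∀ j, j ∉ c.1.1 → xv j = z j := fun j h => dif_neg h
  have hxsum : ∑ j, xv j = 0 := by
    have hsplit : ∀ j, xv j = z j + (if h : j ∈ c.1.1 then (s.1 (binv c j h) : ZMod q) else 0) := by
      intro j
      by_cases h : j ∈ c.1.1
      · rw [hxv]; simp only; rw [dif_pos h, dif_pos h]
      · rw [hxv]; simp only; rw [dif_neg h, dif_neg h]; ring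
    rw [Finset.sum_congr rfl fun j _ => hsplit j, Finset.sum_add_distrib, hzsum]
    have : ∑ j, (if h : j ∈ c.1.1 then (s.1 (binv c j h) : ZMod q) else 0)
        = ∑ j ∈ c.1.1, (if h : j ∈ c.1.1 then (s.1 (binv c j h) : ZMod q) else 0) :=
      (Finset.sum_subset (Finset.subset_univ _) (fun j _ hj => dif_neg hj)).symm
    rw [this, sum_over_T]
    have : ∀ i, (if h : σc c i ∈ c.1.1 then (s.1 (binv c (σc c i) h) : ZMod q) else 0)
        = (s.1 i : ZMod q) := by
      intro i
      rw [dif_pos (σc_mem c i), binv_σc]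
    rw [Finset.sum_congr rfl fun i _ => this i]
    ring
  refine ⟨⟨xv, hxsum⟩, c, ?_⟩
  have hne : ∀ i, xv (σc c i) ≠ c.2 i := by
    intro i heq
    rw [hxσ i, hb i] at heq
    exact (s.1 i).2 (by linear_combination heq)
  have hzv : zvec xv c = z := by
    funext j
    by_cases h : j ∈ c.1.1
    · rw [zvec, dif_pos h, hb, σc_binv]
    · rw [zvec_not_mem _ _ h, hxnot j h]
  rw [entry, dif_pos hne]
  congr 1
  refine Prod.ext ?_ ?_
  · funext i
    refine Subtype.ext ?_
    show xv (σc c i) - c.2 i = (s.1 i : ZMod q)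
    rw [hxσ i, hb i]; ring
  · funext i
    show zvec xv c i.castSucc = s.2 i
    rw [hzv, hzdef, Fin.snoc_castSucc]

section Counting

variable [NeZero q]

/-- The equivalence `X n q ≃ (Fin n → ZMod q)`. -/
def eX (n q : ℕ) : X n q ≃ (Fin n → ZMod q) where
  toFun x := fun i => x.1 i.castSucc
  invFun y := ⟨Fin.snoc y (-∑ i, y i), by
    rw [Fin.sum_univ_castSucc, Fin.snoc_last]
    rw [Finset.sum_congr rfl fun i _ => (Fin.snoc_castSucc (α := fun _ => ZMod q) _ _ i)]
    ring⟩
  left_inv x := by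
    refine Subtype.ext (ext_of_castSucc_sum (fun i => by simp) ?_)
    rw [Fin.sum_univ_castSucc]
    simp [x.2]
  right_inv y := funext fun i => by simp

lemma card_X : Fintype.card (X n q) = q ^ n := by
  rw [Fintype.card_congr (eX n q)]
  simp [ZMod.card]

lemma card_Col : Fintype.card (Col n t q) = (n + 1).choose t * q ^ t := by
  rw [Fintype.card_prod, Fintype.card_finset_len]
  simp [ZMod.card]

lemma card_Sym : Fintype.card (Sym n t q) = (q - 1) ^ t * q ^ n := by
  rw [Fintype.card_prod]
  have h1 : Fintype.card {a : ZMod q // a ≠ 0} = q - 1 := by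
    rw [Fintype.card_subtype_compl, Fintype.card_subtype_eq, ZMod.card]
  simp [h1, ZMod.card]

/-- The count of non-star rows in a column. -/
lemma count_nonstar (hq : 2 ≤ q) (htn : t ≤ n) (c : Col n t q) :
    Fintype.card {x : X n q // ∀ i, x.1 (σc c i) ≠ c.2 i} = (q - 1) ^ t * q ^ (n - t) := by
  classical
  -- transfer to a subtype of V
  have e : {x : X n q // ∀ i, x.1 (σc c i) ≠ c.2 i} ≃
      {v : V n q // (∀ i, v (σc c i) ≠ c.2 i) ∧ ∑ j, v j = 0} :=
    { toFun := fun p => ⟨p.1.1, p.2, p.1.2⟩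
      invFun := fun p => ⟨⟨p.1, p.2.2⟩, p.2.1⟩
      left_inv := fun p => rfl
      right_inv := fun p => rfl }
  rw [Fintype.card_congr e, Fintype.card_subtype]
  -- the unconstrained set A
  set A : Finset (V n q) := Finset.univ.filter (fun v => ∀ i, v (σc c i) ≠ c.2 i) with hA
  have hfilter : (Finset.univ.filter fun v : V n q =>
      (∀ i, v (σc c i) ≠ c.2 i) ∧ ∑ j, v j = 0) = A.filter (fun v => ∑ j, v j = 0) := by
    rw [hA, Finset.filter_filter]
  rw [hfilter]
  -- a coordinate outside the subset
  have hcardT : c.1.1.card < Fintype.card (Fin (n + 1)) := by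
    rw [c.1.2, Fintype.card_fin]; omega
  obtain ⟨j₀, hj₀⟩ : ∃ j₀, j₀ ∉ c.1.1 := by
    by_contra hcon
    push_neg at hcon
    have : (Finset.univ : Finset (Fin (n + 1))) ⊆ c.1.1 := fun j _ => hcon j
    have := Finset.card_le_card this
    rw [Finset.card_univ] at this
    omega
  -- fibers of the sum all have the same cardinality
  have hfib : ∀ s : ZMod q, (A.filter fun v => ∑ j, v j = s).card
      = (A.filter fun v => ∑ j, v j = 0).card := by
    intro s
    refine (Finset.card_nbij' (fun v => Function.update v j₀ (v j₀ + s))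
      (fun v => Function.update v j₀ (v j₀ - s)) ?_ ?_ ?_ ?_).symm
    · intro v hv
      rw [Finset.mem_coe, Finset.mem_filter] at hv
      rw [Finset.mem_coe, Finset.mem_filter]
      obtain ⟨hvA, hvs⟩ := hv
      rw [hA, Finset.mem_filter] at hvA ⊢
      constructor
      · refine ⟨Finset.mem_univ _, fun i => ?_⟩
        show Function.update v j₀ (v j₀ + s) (σc c i) ≠ c.2 i
        rw [Function.update_of_ne (fun h : σc c i = j₀ => hj₀ (h ▸ σc_mem c i))]
        exact hvA.2 i
      · show ∑ j, Function.update v j₀ (v j₀ + s) j = s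
        rw [Finset.sum_update_of_mem (Finset.mem_univ j₀)]
        rw [← Finset.add_sum_erase _ v (Finset.mem_univ j₀)] at hvs
        rw [Finset.sdiff_singleton_eq_erase]
        linear_combination hvs
    · intro v hv
      rw [Finset.mem_coe, Finset.mem_filter] at hv
      rw [Finset.mem_coe, Finset.mem_filter]
      obtain ⟨hvA, hvs⟩ := hv
      rw [hA, Finset.mem_filter] at hvA ⊢
      constructor
      · refine ⟨Finset.mem_univ _, fun i => ?_⟩
        show Function.update v j₀ (v j₀ - s) (σc c i) ≠ c.2 i
        rw [Function.update_of_ne (fun h : σc c i = j₀ => hj₀ (h ▸ σc_mem c i))]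
        exact hvA.2 i
      · show ∑ j, Function.update v j₀ (v j₀ - s) j = 0
        rw [Finset.sum_update_of_mem (Finset.mem_univ j₀)]
        rw [← Finset.add_sum_erase _ v (Finset.mem_univ j₀)] at hvs
        rw [Finset.sdiff_singleton_eq_erase]
        linear_combination hvs
    · intro v _
      show Function.update (Function.update v j₀ (v j₀ + s)) j₀
          (Function.update v j₀ (v j₀ + s) j₀ - s) = v
      rw [Function.update_self, Function.update_idem]
      simp
    · intro v _
      show Function.update (Function.update v j₀ (v j₀ - s)) j₀
          (Function.update v j₀ (v j₀ - s) j₀ + s) = v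
      rw [Function.update_self, Function.update_idem]
      simp
  -- total count over fibers
  have htotal : A.card = ∑ s : ZMod q, (A.filter fun v => ∑ j, v j = s).card :=
    Finset.card_eq_sum_card_fiberwise (fun v _ => Finset.mem_univ _)
  rw [Finset.sum_congr rfl fun s _ => hfib s, Finset.sum_const, Finset.card_univ, ZMod.card,
    smul_eq_mul] at htotal
  -- cardinality of A
  set forb : Fin (n + 1) → Finset (ZMod q) :=
    fun j => if h : j ∈ c.1.1 then {c.2 (binv c j h)}ᶜ else Finset.univ with hforb
  have hAeq : A = Fintype.piFinset forb := by
    ext v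
    rw [hA, Finset.mem_filter, Fintype.mem_piFinset]
    constructor
    · rintro ⟨-, hv⟩ j
      simp only [hforb]
      by_cases h : j ∈ c.1.1
      · rw [dif_pos h, Finset.mem_compl, Finset.mem_singleton]
        have := hv (binv c j h)
        rwa [σc_binv] at this
      · rw [dif_neg h]; exact Finset.mem_univ _
    · intro hv
      refine ⟨Finset.mem_univ _, fun i => ?_⟩
      have := hv (σc c i)
      simp only [hforb] at this
      rw [dif_pos (σc_mem c i), binv_σc, Finset.mem_compl, Finset.mem_singleton] at this
      exact this
  have hAcard : A.card = (q - 1) ^ t * q ^ (n + 1 - t) := by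
    rw [hAeq, Fintype.card_piFinset]
    have hcf : ∀ j, (forb j).card = if j ∈ c.1.1 then q - 1 else q := by
      intro j
      by_cases h : j ∈ c.1.1
      · simp only [hforb]
        rw [dif_pos h, if_pos h, Finset.card_compl, Finset.card_singleton, ZMod.card]
      · simp only [hforb]
        rw [dif_neg h, if_neg h, Finset.card_univ, ZMod.card]
    rw [Finset.prod_congr rfl fun j _ => hcf j, ← Finset.prod_mul_prod_compl c.1.1]
    have h1 : ∏ j ∈ c.1.1, (if j ∈ c.1.1 then q - 1 else q) = (q - 1) ^ t := by
      rw [Finset.prod_congr rfl fun j hj => if_pos hj, Finset.prod_const, c.1.2]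
    have h2 : ∏ j ∈ c.1.1ᶜ, (if j ∈ c.1.1 then q - 1 else q) = q ^ (n + 1 - t) := by
      rw [Finset.prod_congr rfl fun j hj => if_neg (Finset.mem_compl.1 hj), Finset.prod_const,
        Finset.card_compl, c.1.2, Fintype.card_fin]
    rw [h1, h2]
  -- conclude by cancelling q
  have hnt : n + 1 - t = (n - t) + 1 := Nat.succ_sub htn
  have hpow : q ^ (n + 1 - t) = q * q ^ (n - t) := by
    rw [hnt, pow_succ']
  rw [hAcard, hpow] at htotal
  have hq0 : 0 < q := Nat.lt_of_lt_of_le Nat.zero_lt_two hq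
  refine Nat.eq_of_mul_eq_mul_left hq0 (htotal.symm.trans ?_)
  ring

/-- Star count per column. -/
lemma count_star (hq : 2 ≤ q) (htn : t ≤ n) (c : Col n t q) :
    Nat.card {x : X n q // entry x c = none} = q ^ n - (q - 1) ^ t * q ^ (n - t) := by
  rw [Nat.card_eq_fintype_card,
    Fintype.card_congr (Equiv.subtypeEquivRight fun x => entry_eq_none_iff x c),
    Fintype.card_subtype_compl, card_X, count_nonstar hq htn c]

end Counting

/-- The main construction. -/
lemma main (t n q : ℕ) (hq : 2 ≤ q) (htn : t ≤ n) :
    ∃ P : Fin (q ^ n) → Fin ((n + 1).choose t * q ^ t) → Option (Fin ((q - 1) ^ t * q ^ n)),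
      IsPDAWith (q ^ n) ((n + 1).choose t * q ^ t) (q ^ n - (q - 1) ^ t * q ^ (n - t))
        ((q - 1) ^ t * q ^ n) P := by
  haveI : NeZero q := ⟨by omega⟩
  let eF : Fin (q ^ n) ≃ X n q := (Fintype.equivFinOfCardEq card_X).symm
  let eK : Fin ((n + 1).choose t * q ^ t) ≃ Col n t q := (Fintype.equivFinOfCardEq card_Col).symm
  let eS : Sym n t q ≃ Fin ((q - 1) ^ t * q ^ n) := Fintype.equivFinOfCardEq card_Sym
  refine ⟨fun j k => (entry (eF j) (eK k)).map eS, ⟨?_, ?_⟩, ?_⟩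
  · intro s
    obtain ⟨x, c, hxc⟩ := surj htn (eS.symm s)
    exact ⟨eF.symm x, eK.symm c, by simp [hxc]⟩
  · intro j₁ j₂ k₁ k₂ s hne h1 h2
    rw [Option.map_eq_some_iff] at h1 h2
    obtain ⟨a₁, ha₁, ha₁'⟩ := h1
    obtain ⟨a₂, ha₂, ha₂'⟩ := h2
    obtain rfl : a₁ = a₂ := eS.injective (ha₁'.trans ha₂'.symm)
    have hne' : ((eF j₁ : X n q), eK k₁) ≠ (eF j₂, eK k₂) := by
      intro hcon
      rw [Prod.mk.injEq] at hcon
      refine hne ?_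
      rw [Prod.mk.injEq]
      exact ⟨eF.injective hcon.1, eK.injective hcon.2⟩
    obtain ⟨hx, hc, he1, he2⟩ := clash ha₁ ha₂ hne'
    refine ⟨fun hh => hx (by rw [hh]), fun hh => hc (by rw [hh]), ?_, ?_⟩
    · rw [Option.map_eq_none_iff]; exact he1
    · rw [Option.map_eq_none_iff]; exact he2
  · intro k
    have hset : {j : Fin (q ^ n) | (entry (eF j) (eK k)).map eS = none}
        = eF.symm '' {x : X n q | entry x (eK k) = none} := by
      rw [Equiv.image_eq_preimage_symm, Equiv.symm_symm]
      ext j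
      simp [Option.map_eq_none_iff]
    rw [hset, Set.ncard_image_of_injective _ eF.symm.injective, ← Nat.card_coe_set_eq]
    exact count_star hq htn (eK k)

end PDAOA

/-- Theorem 5: for all integers `m, t, q` with `0 < t < m` and `q ≥ 2`, there
exists a `(C(m,t)·q^t, q^{m−1}, q^{m−1} − (q−1)^t·q^{m−t−1}, (q−1)^t·q^{m−1})`
placement delivery array. -/
theorem exists_PDA_OA_strength_m_sub_one (m t q : ℕ)
    (ht : 0 < t) (htm : t < m) (hq : 2 ≤ q) :
    ∃ P : Fin (q ^ (m - 1)) → Fin (m.choose t * q ^ t) →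
        Option (Fin ((q - 1) ^ t * q ^ (m - 1))),
      IsPDAWith (q ^ (m - 1)) (m.choose t * q ^ t)
        (q ^ (m - 1) - (q - 1) ^ t * q ^ (m - t - 1))
        ((q - 1) ^ t * q ^ (m - 1)) P := by
  obtain ⟨n, rfl⟩ : ∃ n, m = n + 1 := ⟨m - 1, by omega⟩
  have htn : t ≤ n := by omega
  have h1 : n + 1 - 1 = n := by omega
  have h2 : n + 1 - t - 1 = n - t := by omega
  rw [h1, h2]
  exact PDAOA.main t n q hq htn
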